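/- For the generator A of the CAM process, A p = −(L + E²/2)(y p)′ + (1/2)([(Ey+g)² + b²] p)″, the stationary density p_s(y) = (1/N)[(Ey+g)²+b²]^{−(ν+1)} exp((2gν/b) arctan((Ey+g)/b)) with ν = −(L/E² + 1/2) satisfies A p_s = 0 pointwise on ℝ (for E, b > 0, L < 0). -/

import Mathlib

open Real

theorem stmt_16 (L E b g N : ℝ) (hL : L < 0) (hE : 0 < E) (hb : 0 < b) (hN : 0 < N)
    (ν : ℝ) (hν : ν = -(L / E ^ 2 + 1 / 2))
    (p : ℝ → ℝ)
    (hp : ∀ y, p y = (1 / N) * ((E * y + g) ^ 2 + b ^ 2) ^ (-(ν + 1)) *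
        Real.exp ((2 * g * ν / b) * Real.arctan ((E * y + g) / b))) :
    ∀ y : ℝ,
      -(L + E ^ 2 / 2) * deriv (fun y => y * p y) y
        + (1 / 2) * deriv (deriv (fun y => ((E * y + g) ^ 2 + b ^ 2) * p y)) y = 0 := by
  have hu : ∀ y : ℝ, 0 < (E * y + g) ^ 2 + b ^ 2 := fun y => by positivity
  -- derivative of p
  have hp' : ∀ y : ℝ, HasDerivAt p
      (E * (2 * g * ν - 2 * (ν + 1) * (E * y + g)) / ((E * y + g) ^ 2 + b ^ 2) * p y) y := by
    intro y
    have hlin : HasDerivAt (fun y : ℝ => E * y + g) E y := by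
      simpa using ((hasDerivAt_id y).const_mul E).add_const g
    have husq : HasDerivAt (fun y : ℝ => (E * y + g) ^ 2 + b ^ 2) (2 * (E * y + g) * E) y := by
      simpa using (hlin.pow 2).add_const (b ^ 2)
    have hrpow : HasDerivAt (fun y : ℝ => ((E * y + g) ^ 2 + b ^ 2) ^ (-(ν + 1)))
        (2 * (E * y + g) * E * -(ν + 1) * ((E * y + g) ^ 2 + b ^ 2) ^ (-(ν + 1) - 1)) y :=
      husq.rpow_const (Or.inl (ne_of_gt (hu y)))
    have hexp : HasDerivAt (fun y : ℝ =>
        Real.exp ((2 * g * ν / b) * Real.arctan ((E * y + g) / b)))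
        (Real.exp ((2 * g * ν / b) * Real.arctan ((E * y + g) / b)) *
          ((2 * g * ν / b) * (1 / (1 + ((E * y + g) / b) ^ 2) * (E / b)))) y := by
      have h1 : HasDerivAt (fun y : ℝ => (E * y + g) / b) (E / b) y := by
        simpa using hlin.div_const b
      have h2 : HasDerivAt (fun y : ℝ => Real.arctan ((E * y + g) / b))
          (1 / (1 + ((E * y + g) / b) ^ 2) * (E / b)) y :=
        (Real.hasDerivAt_arctan _).comp y h1
      exact (h2.const_mul (2 * g * ν / b)).exp
    have hmain := ((hrpow.mul hexp).const_mul (1 / N))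
    have heq : (fun y : ℝ => (1 / N) * (((E * y + g) ^ 2 + b ^ 2) ^ (-(ν + 1)) *
        Real.exp ((2 * g * ν / b) * Real.arctan ((E * y + g) / b)))) = p := by
      funext z; rw [hp z]; ring
    simp only [Pi.mul_apply] at hmain
    rw [heq] at hmain
    refine hmain.congr_deriv ?_
    rw [hp y]
    have h1 : ((E * y + g) ^ 2 + b ^ 2) ^ (-(ν + 1) - 1)
        = ((E * y + g) ^ 2 + b ^ 2) ^ (-(ν + 1)) / ((E * y + g) ^ 2 + b ^ 2) :=
      Real.rpow_sub_one (ne_of_gt (hu y)) _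
    rw [h1]
    have hb' : (b : ℝ) ≠ 0 := ne_of_gt hb
    have hu' : ((E * y + g) ^ 2 + b ^ 2) ≠ 0 := ne_of_gt (hu y)
    field_simp
    ring
  -- derivative of q = u * p
  have hq' : ∀ y : ℝ, HasDerivAt (fun y => ((E * y + g) ^ 2 + b ^ 2) * p y)
      (-(2 * E ^ 2 * ν) * (y * p y)) y := by
    intro y
    have hlin : HasDerivAt (fun y : ℝ => E * y + g) E y := by
      simpa using ((hasDerivAt_id y).const_mul E).add_const g
    have husq : HasDerivAt (fun y : ℝ => (E * y + g) ^ 2 + b ^ 2) (2 * (E * y + g) * E) y := by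
      simpa using (hlin.pow 2).add_const (b ^ 2)
    have h := husq.mul (hp' y)
    simp only [Pi.mul_def] at h
    refine h.congr_deriv ?_
    have hu' : ((E * y + g) ^ 2 + b ^ 2) ≠ 0 := ne_of_gt (hu y)
    field_simp
    ring
  have hyp : ∀ y : ℝ, HasDerivAt (fun y => y * p y) (p y + y * (E * (2 * g * ν - 2 * (ν + 1) * (E * y + g)) / ((E * y + g) ^ 2 + b ^ 2) * p y)) y := by
    intro y
    simpa [Pi.mul_def] using (hasDerivAt_id y).mul (hp' y)
  intro y
  have hdq : deriv (fun y => ((E * y + g) ^ 2 + b ^ 2) * p y)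
      = fun y => -(2 * E ^ 2 * ν) * (y * p y) := by
    funext z; exact (hq' z).deriv
  rw [hdq]
  have hD : deriv (fun y => -(2 * E ^ 2 * ν) * (y * p y)) y
      = -(2 * E ^ 2 * ν) * deriv (fun y => y * p y) y := by
    exact deriv_const_mul _ (hyp y).differentiableAt
  rw [hD]
  have hE2 : E ^ 2 * ν = -(L + E ^ 2 / 2) := by
    rw [hν]; field_simp
  have : -(L + E ^ 2 / 2) = E ^ 2 * ν := hE2.symm
  rw [this]; ring
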